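/- Let A be a commutative ring and ℓ ≥ 0. If for all x₀, …, x_ℓ ∈ A there exist a₀, …, a_ℓ ∈ A and m₀, …, m_ℓ ∈ ℕ such that x₀^{m₀}·(x₁^{m₁}·(⋯(x_ℓ^{m_ℓ}·(1 + a_ℓ·x_ℓ) + ⋯ + a₁·x₁)⋯) + a₀·x₀) = 0, then the Krull dimension of A is at most ℓ. (Equivalently, the existence of such algebraic identities for all sequences of length ℓ+1 characterizes Krull dimension ≤ ℓ.) -/

import Mathlib

/-- The iterated "Krull boundary" expression
`x₀^{m₀}·(x₁^{m₁}·(⋯(x_ℓ^{m_ℓ}·(1 + a_ℓ·x_ℓ) + ⋯ + a₁·x₁)⋯) + a₀·x₀)`. -/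
def krullExpr {A : Type*} [CommRing A] : List (A × A × ℕ) → A
  | [] => 1
  | (x, a, m) :: rest => x ^ m * (krullExpr rest + a * x)

lemma krullExpr_not_mem {A : Type*} [CommRing A] :
    ∀ (L : List (A × A × ℕ)) (P : ℕ → Ideal A),
      (∀ n, (P n).IsPrime) → (∀ n, P n ≤ P (n + 1)) →
      (∀ (i : ℕ) (t : A × A × ℕ), L[i]? = some t → t.1 ∈ P (i + 1) ∧ t.1 ∉ P i) →
      krullExpr L ∉ P 0
  | [], P, hp, _, _ => by
    simpa [krullExpr] using (hp 0).ne_top ∘ (Ideal.eq_top_of_isUnit_mem _ · isUnit_one)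
  | (x, a, m) :: rest, P, hp, hmono, hx => by
    have hrest : krullExpr rest ∉ P 1 :=
      krullExpr_not_mem rest (fun n => P (n + 1)) (fun n => hp (n + 1))
        (fun n => hmono (n + 1)) (fun i t ht => hx (i + 1) t (by simpa using ht))
    have hx0 := hx 0 (x, a, m) (by simp)
    intro hmem
    have := hp 0
    have h1 : krullExpr rest + a * x ∈ P 0 := by
      rcases (hp 0).mem_or_mem (show x ^ m * (krullExpr rest + a * x) ∈ P 0 from hmem) with h | h
      · exact absurd ((hp 0).mem_of_pow_mem m h) hx0.2
      · exact h
    have h2 : krullExpr rest + a * x ∈ P 1 := hmono 0 h1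
    exact hrest (by simpa using (Ideal.sub_mem _ h2 (Ideal.mul_mem_left _ a hx0.1)))

/-- The algebraic-identity characterization implies the Krull dimension bound:
if for all `x₀, …, x_ℓ` there are `a₀, …, a_ℓ` and exponents `m₀, …, m_ℓ` with
`x₀^{m₀}·(x₁^{m₁}·(⋯(x_ℓ^{m_ℓ}·(1 + a_ℓ·x_ℓ) + ⋯ + a₁·x₁)⋯) + a₀·x₀) = 0`,
then `ringKrullDim A ≤ ℓ`. -/
theorem krullDim_le_of_identities {A : Type*} [CommRing A] (ℓ : ℕ)
    (h : ∀ x : Fin (ℓ + 1) → A, ∃ a : Fin (ℓ + 1) → A, ∃ m : Fin (ℓ + 1) → ℕ,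
      krullExpr ((List.finRange (ℓ + 1)).map fun i => (x i, a i, m i)) = 0) :
    ringKrullDim A ≤ ℓ := by
  rw [ringKrullDim, Order.krullDim]
  apply iSup_le
  intro p
  by_contra hlen
  have hlen' : ℓ + 1 ≤ p.length := by
    by_contra hc
    push_neg at hc
    exact hlen (by exact_mod_cast Nat.lt_succ_iff.mp hc)
  -- the chain of primes
  set P : ℕ → Ideal A := fun n =>
    (p ⟨min n (ℓ + 1), by omega⟩).asIdeal with hP
  have hPmono : ∀ i j : ℕ, i ≤ j → P i ≤ P j := by
    intro i j hij
    exact (PrimeSpectrum.asIdeal_le_asIdeal _ _).mpr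
      (p.monotone (Fin.mk_le_mk.mpr (by omega)))
  have hPlt : ∀ i : ℕ, i < ℓ + 1 → P i < P (i + 1) := by
    intro i hi
    exact (PrimeSpectrum.asIdeal_lt_asIdeal _ _).mpr
      (p.strictMono (Fin.mk_lt_mk.mpr (by omega)))
  -- choose elements
  have hxex : ∀ i : Fin (ℓ + 1), ∃ y : A, y ∈ P (i + 1) ∧ y ∉ P i := fun i =>
    SetLike.exists_of_lt (hPlt i i.isLt)
  choose x hx1 hx2 using hxex
  obtain ⟨a, m, hiden⟩ := h x
  have := krullExpr_not_mem ((List.finRange (ℓ + 1)).map fun i => (x i, a i, m i)) P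
    (fun n => (p _).isPrime) (fun n => hPmono n (n + 1) (Nat.le_succ n)) ?_
  · rw [hiden] at this
    exact this (Submodule.zero_mem _)
  · intro i t ht
    have hlt : i < ℓ + 1 := by
      by_contra hge
      rw [List.getElem?_eq_none (by simpa using Nat.le_of_not_lt hge)] at ht
      exact Option.some_ne_none t ht.symm
    have : t = (x ⟨i, hlt⟩, a ⟨i, hlt⟩, m ⟨i, hlt⟩) := by
      rw [List.getElem?_eq_getElem (by simpa using hlt)] at ht
      simpa using ht.symm
    subst this
    exact ⟨hx1 ⟨i, hlt⟩, hx2 ⟨i, hlt⟩⟩
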